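/- Define F_n(t) as the determinant of the (n+1)×(n+1) matrix 𝓜ᴮ_n whose (i, n+1) entry is t^{(n-i+1)^2} and whose (i,j) entry for j ≤ n is t^{C(j-i+1,2)} if j-i+1 ≥ 0 and 0 otherwise. Then F_n(t) = Σ_{i=0}^{n} (-1)^i t^{i^2} H_{n-1-i}(t), where H_m(t) = det 𝓜ᴬ_m (with H_{-1} = H_0 = 1) is the determinant of the type-A matrix. -/

import Mathlib

open Polynomial

/-- The `(n+1) × (n+1)` matrix `𝓜ᴬ_n` over `ℤ[t]`. -/
noncomputable def MatA (n : ℕ) : Matrix (Fin (n + 1)) (Fin (n + 1)) (Polynomial ℤ) :=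
  Matrix.of fun i j =>
    if (i : ℕ) ≤ (j : ℕ) + 1 then (X : Polynomial ℤ) ^ (((j : ℕ) + 1 - (i : ℕ)).choose 2) else 0

/-- `H_m = det 𝓜ᴬ_m` for `m ≥ 0`, and `H_{-1} = 1` (note `H_0 = 1` as well). -/
noncomputable def polyH (m : ℤ) : Polynomial ℤ :=
  if 0 ≤ m then (MatA m.toNat).det else 1

/-- The `(n+1) × (n+1)` matrix `𝓜ᴮ_n` over `ℤ[t]`: its `(i, n+1)` entry (1-based) is
`t^{(n-i+1)^2}`, and for `j ≤ n` its `(i,j)` entry is `t^{C(j-i+1,2)}` when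
`j - i + 1 ≥ 0` and `0` otherwise. -/
noncomputable def MatB (n : ℕ) : Matrix (Fin (n + 1)) (Fin (n + 1)) (Polynomial ℤ) :=
  Matrix.of fun i j =>
    if (j : ℕ) = n then (X : Polynomial ℤ) ^ ((n - (i : ℕ)) ^ 2)
    else if (i : ℕ) ≤ (j : ℕ) + 1 then (X : Polynomial ℤ) ^ (((j : ℕ) + 1 - (i : ℕ)).choose 2)
    else 0

noncomputable def matC (n k : ℕ) : Matrix (Fin n) (Fin n) (Polynomial ℤ) :=
  Matrix.of fun a b =>
    if (if (a : ℕ) < k then (a : ℕ) else (a : ℕ) + 1) ≤ (b : ℕ) + 1 then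
      (X : Polynomial ℤ) ^ (((b : ℕ) + 1 - (if (a : ℕ) < k then (a : ℕ) else (a : ℕ) + 1)).choose 2)
    else 0

lemma coe_succAbove {n : ℕ} (k : Fin (n + 1)) (a : Fin n) :
    ((k.succAbove a : Fin (n + 1)) : ℕ) = if (a : ℕ) < (k : ℕ) then (a : ℕ) else (a : ℕ) + 1 := by
  rw [Fin.succAbove]
  split_ifs with h1 h2 h3 <;> simp_all [Fin.lt_def]

set_option maxHeartbeats 1000000 in
lemma detC : ∀ n k : ℕ, k ≤ n → (matC n k).det = polyH ((k : ℤ) - 1) := by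
  intro n
  induction n with
  | zero =>
    intro k hk
    interval_cases k
    simp [Matrix.det_fin_zero, polyH]
  | succ n ih =>
    intro k hk
    rcases eq_or_lt_of_le hk with h | h
    · subst h
      have : matC (n + 1) (n + 1) = MatA n := by
        ext a b
        simp [matC, MatA, Nat.le_of_lt_succ a.isLt]
      rw [this]
      have h3 : ((((n + 1 : ℕ) : ℤ)) - 1).toNat = n := by omega
      simp only [polyH]
      rw [if_pos (show (0:ℤ) ≤ ((n+1:ℕ):ℤ) - 1 by omega), h3]
    · have hk' : k ≤ n := by omega
      rw [Matrix.det_succ_row _ (Fin.last n)]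
      rw [Finset.sum_eq_single (Fin.last n)]
      · have h1 : matC (n + 1) k (Fin.last n) (Fin.last n) = 1 := by
          simp [matC, Fin.last, Nat.not_lt.2 hk']
        have h2 : ((matC (n + 1) k).submatrix (Fin.last n).succAbove (Fin.last n).succAbove) =
            matC n k := by
          ext a b
          simp [matC, Fin.succAbove_last, Matrix.submatrix, Fin.castSucc, Fin.castAdd, Fin.castLE]
        rw [h1, h2, ih k hk', Fin.val_last, mul_one, ← two_mul, pow_mul]
        norm_num
      · intro b _ hb
        have hbn : (b : ℕ) < n := Fin.val_lt_last hb
        have hz : matC (n + 1) k (Fin.last n) b = 0 := by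
          have hcond : ¬ ((if (n : ℕ) < k then (n : ℕ) else (n : ℕ) + 1) ≤ (b : ℕ) + 1) := by
            rw [if_neg (Nat.not_lt.2 hk')]
            omega
          simp only [matC, Matrix.of_apply, Fin.val_last]
          rw [if_neg hcond]
        simp [hz]
      · intro h'
        exact absurd (Finset.mem_univ _) h'


set_option maxHeartbeats 1000000 in
/-- Cofactor expansion along the last column:
`F_n(t) = det 𝓜ᴮ_n = ∑_{i=0}^{n} (-1)^i t^{i^2} H_{n-1-i}(t)`. -/
theorem det_MatB_expansion_last_column :
    ∀ n : ℕ, 1 ≤ n → (MatB n).det =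
      ∑ i ∈ Finset.range (n + 1),
        (-1 : Polynomial ℤ) ^ i * ((X : Polynomial ℤ) ^ (i ^ 2) * polyH ((n : ℤ) - 1 - i)) := by
  intro n hn
  rw [Matrix.det_succ_column _ (Fin.last n)]
  have key : ∀ i : Fin (n + 1),
      (-1 : Polynomial ℤ) ^ ((i : ℕ) + (Fin.last n : ℕ)) * MatB n i (Fin.last n) *
        ((MatB n).submatrix i.succAbove (Fin.last n).succAbove).det =
      (-1) ^ ((i : ℕ) + n) * X ^ ((n - (i : ℕ)) ^ 2) * polyH ((i : ℤ) - 1) := by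
    intro i
    have hB : MatB n i (Fin.last n) = X ^ ((n - (i : ℕ)) ^ 2) := by
      simp [MatB, Fin.last]
    have hsub : ((MatB n).submatrix i.succAbove (Fin.last n).succAbove) = matC n i := by
      ext a b
      have hb : ((Fin.castSucc b : Fin (n + 1)) : ℕ) = (b : ℕ) := rfl
      have hbn : ((Fin.castSucc b : Fin (n + 1)) : ℕ) ≠ n := by
        rw [hb]; exact Nat.ne_of_lt b.isLt
      simp only [Matrix.submatrix_apply, Fin.succAbove_last, MatB, matC, Matrix.of_apply]
      rw [if_neg hbn, coe_succAbove, hb]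
    rw [hB, hsub, detC n i (Nat.le_of_lt_succ i.isLt), Fin.val_last]
  rw [Finset.sum_congr rfl (fun i _ => key i)]
  rw [Fin.sum_univ_eq_sum_range (fun j => (-1 : Polynomial ℤ) ^ (j + n) * X ^ ((n - j) ^ 2)
      * polyH ((j : ℤ) - 1)) (n + 1)]
  rw [← Finset.sum_range_reflect
      (fun i => (-1 : Polynomial ℤ) ^ i * ((X : Polynomial ℤ) ^ (i ^ 2) * polyH ((n : ℤ) - 1 - i)))
      (n + 1)]
  apply Finset.sum_congr rfl
  intro j hj
  have hjn : j ≤ n := Nat.lt_succ_iff.mp (Finset.mem_range.mp hj)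
  simp only [Nat.add_sub_cancel]
  have hsign : ((-1 : Polynomial ℤ)) ^ (j + n) = (-1) ^ (n - j) := by
    have h2 : j + n = (n - j) + 2 * j := by omega
    rw [h2, pow_add, pow_mul]
    norm_num
  have hH : ((j : ℤ) - 1) = ((n : ℤ) - 1 - ((n - j : ℕ) : ℤ)) := by
    rw [Nat.cast_sub hjn]; ring
  rw [hsign, hH]; ring
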